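/- Let n ≥ 3 and let I be the product over all (n-2)-element subsets {i_1,...,i_{n-2}} of {1,...,n} of the ideals (x_{i_1},...,x_{i_{n-2}}) in k[x_1,...,x_n]. Then I is generated by all monomials x_1^{a_1}···x_n^{a_n} of degree C(n,2) such that a_i ≤ C(n-1,2) for all i and at least three of the a_i are positive. -/

import Mathlib

set_option maxHeartbeats 1000000

open MvPolynomial Finset

private lemma prod_monomial' {K : Type*} [CommSemiring K] {σ ι : Type*} (t : Finset ι)
    (d : ι → (σ →₀ ℕ)) :
    (∏ i ∈ t, (monomial (d i) (1:K))) = monomial (∑ i ∈ t, d i) 1 := by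
  classical
  induction t using Finset.induction_on with
  | empty => simp
  | insert _ _ h ih => rw [Finset.prod_insert h, ih, Finset.sum_insert h, monomial_mul, one_mul]

/-- For n ≥ 3, the product over all (n-2)-element subsets of the variables of the ideals
generated by those variables is generated by all monomials of degree C(n,2) with all
exponents ≤ C(n-1,2) and at least three positive exponents. -/
theorem stmt_14 (K : Type*) [Field K] (n : ℕ) (hn : 3 ≤ n) :
    (∏ s ∈ Finset.univ.filter (fun s : Finset (Fin n) => s.card = n - 2),
        Ideal.span ((fun i => (X i : MvPolynomial (Fin n) K)) '' (s : Set (Fin n)))) =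
      Ideal.span {f : MvPolynomial (Fin n) K |
        ∃ a : Fin n →₀ ℕ, (∑ i, a i = n.choose 2) ∧ (∀ i, a i ≤ (n - 1).choose 2) ∧
          3 ≤ a.support.card ∧ f = monomial a 1} := by
  classical
  obtain ⟨m, rfl⟩ : ∃ m, n = m + 3 := ⟨n - 3, by omega⟩
  have h2 : m + 3 - 2 = m + 1 := by omega
  have h1 : m + 3 - 1 = m + 2 := by omega
  rw [h2, h1]
  set F : Finset (Finset (Fin (m+3))) :=
    univ.filter (fun s : Finset (Fin (m+3)) => s.card = m+1) with hF
  have hmemF : ∀ s : Finset (Fin (m+3)), s ∈ F ↔ s.card = m+1 := by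
    intro s; simp [hF]
  have cardF : F.card = (m+3).choose 2 := by
    have hpc : F = powersetCard (m+1) univ := by
      rw [powersetCard_eq_filter, powerset_univ]
    rw [hpc, card_powersetCard, card_univ, Fintype.card_fin]
    rw [← h2, Nat.choose_symm (by omega)]
  have hchsymm : (m+2).choose m = (m+2).choose 2 := by
    have := Nat.choose_symm (n := m+2) (k := 2) (by omega)
    simpa [show m+2-2 = m from by omega] using this
  rw [Ideal.prod_span]
  congr 1
  ext f
  rw [Set.mem_finset_prod]
  constructor
  · -- forward: a product of chosen variables is a valid monomial
    rintro ⟨g, hg, rfl⟩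
    have hch : ∀ s : {x // x ∈ F}, ∃ i, i ∈ s.1 ∧ g s.1 = X i := by
      intro s
      obtain ⟨i, hi, hXi⟩ := hg s.2
      exact ⟨i, hi, hXi.symm⟩
    choose c hc1 hc2 using hch
    have haj : ∀ j, (∑ s ∈ F.attach, Finsupp.single (c s) 1) j
        = (F.attach.filter (fun s => c s = j)).card := by
      intro j
      rw [Finsupp.finset_sum_apply, Finset.card_filter]
      exact Finset.sum_congr rfl fun s _ => Finsupp.single_apply
    have hfib := Finset.card_eq_sum_card_fiberwise
      (s := F.attach) (t := (univ : Finset (Fin (m+3)))) (f := c)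
      (fun s _ => Finset.mem_univ (c s))
    refine ⟨∑ s ∈ F.attach, Finsupp.single (c s) 1, ?_, ?_, ?_, ?_⟩
    · -- total degree
      calc ∑ i, (∑ s ∈ F.attach, Finsupp.single (c s) 1) i
          = ∑ j : Fin (m+3), (F.attach.filter (fun s => c s = j)).card :=
            Finset.sum_congr rfl fun j _ => haj j
        _ = F.attach.card := hfib.symm
        _ = (m+3).choose 2 := by rw [Finset.card_attach, cardF]
    · -- exponent bound
      intro j
      rw [haj]
      have hle : ((F.attach.filter (fun s => c s = j)).card) ≤
          (powersetCard m (univ.erase j)).card := by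
        apply Finset.card_le_card_of_injOn (fun s => s.1.erase j)
        · intro s hs
          rw [Finset.mem_coe, Finset.mem_filter] at hs
          have hjs : j ∈ s.1 := hs.2 ▸ hc1 s
          rw [Finset.mem_coe, Finset.mem_powersetCard]
          constructor
          · intro x hx
            rw [Finset.mem_erase] at hx ⊢
            exact ⟨hx.1, Finset.mem_univ x⟩
          · rw [Finset.card_erase_of_mem hjs, (hmemF s.1).1 s.2]
            omega
        · intro s hs t ht hst
          rw [Finset.mem_coe, Finset.mem_filter] at hs ht
          have hjs : j ∈ s.1 := hs.2 ▸ hc1 s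
          have hjt : j ∈ t.1 := ht.2 ▸ hc1 t
          have : s.1 = t.1 := by
            rw [← Finset.insert_erase hjs, ← Finset.insert_erase hjt]
            exact congrArg (insert j) hst
          exact Subtype.ext this
      rw [card_powersetCard, Finset.card_erase_of_mem (Finset.mem_univ j), card_univ,
        Fintype.card_fin, h1, hchsymm] at hle
      exact hle
    · -- at least three positive exponents
      by_contra hlt
      push_neg at hlt
      obtain ⟨T, hT1, -, hT2⟩ := Finset.exists_subsuperset_card_eq
        (n := 2) (Finset.subset_univ (∑ s ∈ F.attach, Finsupp.single (c s) 1).support)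
        (by omega) (by simp)
      have hTc : Tᶜ ∈ F := by
        rw [hmemF, Finset.card_compl, Fintype.card_fin, hT2]
        omega
      set s0 : {x // x ∈ F} := ⟨Tᶜ, hTc⟩ with hs0
      have hpos : 0 < (∑ s ∈ F.attach, Finsupp.single (c s) 1) (c s0) := by
        rw [haj]
        exact Finset.card_pos.2 ⟨s0, Finset.mem_filter.2 ⟨Finset.mem_attach _ _, rfl⟩⟩
      have hmemT : c s0 ∈ T :=
        hT1 (Finsupp.mem_support_iff.2 (Nat.pos_iff_ne_zero.1 hpos))
      have : c s0 ∈ Tᶜ := hc1 s0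
      rw [Finset.mem_compl] at this
      exact this hmemT
    · rw [← Finset.prod_attach F (fun s => g s), ← prod_monomial']
      exact Finset.prod_congr rfl fun s _ => hc2 s
  · -- reverse: every valid monomial is a product of chosen variables (Hall)
    rintro ⟨a, hsum, hlea, hsupp, rfl⟩
    set t : {x // x ∈ F} → Finset ((_ : Fin (m+3)) × ℕ) :=
      fun s => s.1.sigma (fun j => Finset.range (a j)) with ht
    have hall : ∀ S : Finset {x // x ∈ F}, S.card ≤ (S.biUnion t).card := by
      intro S
      set U := S.biUnion (fun s => s.1) with hU
      have hbU : S.biUnion t = U.sigma (fun j => Finset.range (a j)) := by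
        ext ⟨j, k⟩
        simp only [Finset.mem_biUnion, Finset.mem_sigma, ht, hU]
        constructor
        · rintro ⟨s, hs, hj, hk⟩; exact ⟨⟨s, hs, hj⟩, hk⟩
        · rintro ⟨⟨s, hs, hj⟩, hk⟩; exact ⟨s, hs, hj, hk⟩
      rw [hbU, Finset.card_sigma]
      simp only [Finset.card_range]
      have hSU : S.card ≤ (powersetCard (m+1) U).card := by
        apply Finset.card_le_card_of_injOn (fun s => s.1)
        · intro s hs
          rw [Finset.mem_coe, Finset.mem_powersetCard]
          exact ⟨fun x hx => Finset.mem_biUnion.2 ⟨s, hs, hx⟩, (hmemF s.1).1 s.2⟩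
        · intro s _ u _ h
          exact Subtype.ext h
      rw [card_powersetCard] at hSU
      refine hSU.trans ?_
      have hUcard : U.card ≤ m + 3 := le_trans (Finset.card_le_univ U) (by simp)
      by_cases h0 : U.card ≤ m
      · rw [Nat.choose_eq_zero_of_lt (by omega)]
        exact Nat.zero_le _
      · by_cases hA : U.card = m+1
        · rw [hA, Nat.choose_self]
          have hns : ¬ a.support ⊆ Uᶜ := by
            intro hsub
            have := Finset.card_le_card hsub
            rw [Finset.card_compl, Fintype.card_fin, hA] at this
            omega
          obtain ⟨j, hj1, hj2⟩ := Finset.not_subset.1 hns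
          have hjU : j ∈ U := by simpa using hj2
          calc 1 ≤ a j := Nat.one_le_iff_ne_zero.2 (Finsupp.mem_support_iff.1 hj1)
            _ ≤ ∑ j ∈ U, a j := Finset.single_le_sum (fun _ _ => Nat.zero_le _) hjU
        · by_cases hB : U.card = m+2
          · obtain ⟨j0, hj0⟩ := Finset.card_eq_one.1
              (show (Uᶜ).card = 1 by rw [Finset.card_compl, Fintype.card_fin, hB]; omega)
            have hsplit : ∑ j ∈ U, a j + ∑ j ∈ Uᶜ, a j = (m+3).choose 2 := by
              rw [Finset.sum_add_sum_compl, hsum]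
            rw [hj0, Finset.sum_singleton] at hsplit
            have hpas : (m+3).choose 2 = (m+2).choose 1 + (m+2).choose 2 :=
              Nat.choose_succ_succ _ _
            have hch : (m+2).choose (m+1) = (m+2).choose 1 := by
              have := Nat.choose_symm (n := m+2) (k := 1) (by omega)
              simpa [show m+2-1 = m+1 from by omega] using this
            have hja := hlea j0
            rw [hB, hch, Nat.choose_one_right]
            rw [Nat.choose_one_right] at hpas
            omega
          · have hC : U.card = m + 3 := by omega
            have hUuniv : U = univ := Finset.eq_univ_of_card U (by rw [hC, Fintype.card_fin])
            have hcs : (m+3).choose (m+1) = (m+3).choose 2 := by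
              have := Nat.choose_symm (n := m+3) (k := 2) (by omega)
              simpa [h2] using this
            rw [hUuniv, card_univ, Fintype.card_fin, hcs]
            exact le_of_eq hsum.symm
    obtain ⟨fc, hinj, hmemc⟩ := (Finset.all_card_le_biUnion_card_iff_exists_injective t).1 hall
    set c : {x // x ∈ F} → Fin (m+3) := fun s => (fc s).1 with hcdef
    have hc1 : ∀ s, c s ∈ s.1 := fun s => (Finset.mem_sigma.1 (hmemc s)).1
    have hc2 : ∀ s, (fc s).2 < a (c s) :=
      fun s => Finset.mem_range.1 (Finset.mem_sigma.1 (hmemc s)).2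
    have hcount_le : ∀ j, (F.attach.filter (fun s => c s = j)).card ≤ a j := by
      intro j
      have hle : (F.attach.filter (fun s => c s = j)).card ≤ (Finset.range (a j)).card := by
        apply Finset.card_le_card_of_injOn (fun s => (fc s).2)
        · intro s hs
          rw [Finset.mem_coe, Finset.mem_filter] at hs
          exact Finset.mem_range.2 (hs.2 ▸ hc2 s)
        · intro s hs u hu h
          rw [Finset.mem_coe, Finset.mem_filter] at hs hu
          exact hinj (Sigma.ext (hs.2.trans hu.2.symm) (heq_of_eq h))
      rwa [Finset.card_range] at hle
    have hfib := Finset.card_eq_sum_card_fiberwise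
      (s := F.attach) (t := (univ : Finset (Fin (m+3)))) (f := c)
      (fun s _ => Finset.mem_univ (c s))
    have hsumc : ∑ j : Fin (m+3), (F.attach.filter (fun s => c s = j)).card
        = ∑ j : Fin (m+3), a j := by
      rw [← hfib, Finset.card_attach, cardF, hsum]
    have heqc : ∀ j : Fin (m+3), (F.attach.filter (fun s => c s = j)).card = a j := by
      intro j
      exact (Finset.sum_eq_sum_iff_of_le (fun i _ => hcount_le i)).1 hsumc j (Finset.mem_univ j)
    have haf : a = ∑ s ∈ F.attach, Finsupp.single (c s) 1 := by
      ext j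
      rw [Finsupp.finset_sum_apply, ← heqc j, Finset.card_filter]
      exact (Finset.sum_congr rfl fun s _ => Finsupp.single_apply).symm
    refine ⟨fun s => if h : s ∈ F then X (c ⟨s, h⟩) else 1, fun {s} hs => ?_, ?_⟩
    · show (if h : s ∈ F then X (c ⟨s, h⟩) else 1) ∈ _
      rw [dif_pos hs]
      exact Set.mem_image_of_mem _ (hc1 ⟨s, hs⟩)
    · rw [← Finset.prod_attach F (fun s => if h : s ∈ F then X (c ⟨s, h⟩) else 1)]
      have hXc : ∀ s : {x // x ∈ F},
          (if h : s.1 ∈ F then X (c ⟨s.1, h⟩) else 1)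
            = (monomial (Finsupp.single (c s) 1) (1:K)) := by
        intro s
        rw [dif_pos s.2]
        rfl
      rw [Finset.prod_congr rfl (fun s _ => hXc s), prod_monomial', ← haf]
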